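/- (Validity of the composition axiom A3.) For every causal deontic model M_D, every tuple X⃗ of distinct endogenous variables with values x⃗, every endogenous variable Y not in X⃗ with value y, and every endogenous variable Z not in X⃗ and distinct from Y with value z: if M_D ⊨ [X⃗=x⃗]Y=y and M_D ⊨ [X⃗=x⃗]Z=z, then M_D ⊨ [X⃗=x⃗,Y=y]Z=z. -/

import Mathlib

/-- A signature `(U, V, R)`: finite set of exogenous variables `U`, finite set of
endogenous variables `V` (disjoint from `U`, modelled by a sum type), and for each
variable a finite nonempty range of values. -/
structure Signature where
  U : Type
  V : Type
  R : U ⊕ V → Type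
  fintypeU : Fintype U
  fintypeV : Fintype V
  decEqU : DecidableEq U
  decEqV : DecidableEq V
  fintypeR : ∀ X, Fintype (R X)
  nonemptyR : ∀ X, Nonempty (R X)
  decEqR : ∀ X, DecidableEq (R X)

attribute [instance] Signature.fintypeU Signature.fintypeV Signature.decEqU
  Signature.decEqV Signature.fintypeR Signature.nonemptyR Signature.decEqR

/-- An assignment of values to all the variables. -/
abbrev Assignment (S : Signature) : Type := ∀ X : S.U ⊕ S.V, S.R X

/-- An exogenous setting: an assignment of values to all exogenous variables. -/
abbrev ExoSetting (S : Signature) : Type := ∀ X : S.U, S.R (Sum.inl X)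

/-- An assignment of values to all variables except `X` (i.e. `A^{-X}`). -/
abbrev CoAssignment (S : Signature) (X : S.U ⊕ S.V) : Type :=
  ∀ Y : S.U ⊕ S.V, Y ≠ X → S.R Y

/-- The restriction `A^{-X}` of an assignment. -/
def Assignment.minus {S : Signature} (A : Assignment S) (X : S.U ⊕ S.V) :
    CoAssignment S X := fun Y _ => A Y

/-- A set of structural functions: for each endogenous variable `X`, a function
giving the value of `X` from the values of all the other variables. -/
abbrev StructFns (S : Signature) : Type :=
  ∀ X : S.V, CoAssignment S (Sum.inr X) → S.R (Sum.inr X)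

/-- `A` complies with `F` iff `A(X) = f_X(A^{-X})` for every endogenous `X`. -/
def Complies (S : Signature) (F : StructFns S) (A : Assignment S) : Prop :=
  ∀ X : S.V, A (Sum.inr X) = F X (A.minus (Sum.inr X))

/-- `F` is recursive (acyclic): there is a strict total order on the variables such
that each `f_X` does not depend on the values of variables strictly above `X`. -/
def Recursive (S : Signature) (F : StructFns S) : Prop :=
  ∃ lt : (S.U ⊕ S.V) → (S.U ⊕ S.V) → Prop,
    IsStrictTotalOrder (S.U ⊕ S.V) lt ∧
    ∀ X : S.V, ∀ B B' : CoAssignment S (Sum.inr X),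
      (∀ Y (hne : Y ≠ Sum.inr X), lt Y (Sum.inr X) → B Y hne = B' Y hne) →
      F X B = F X B'

/-- An intervention tuple `X⃗ = x⃗`: a list of endogenous variables with values. -/
abbrev Ivn (S : Signature) : Type := List ((X : S.V) × S.R (Sum.inr X))

/-- The variables of an intervention tuple. -/
def Ivn.fsts {S : Signature} (l : Ivn S) : List S.V := l.map Sigma.fst

/-- The variables in the tuple are pairwise distinct. -/
def Ivn.Distinct {S : Signature} (l : Ivn S) : Prop := (l.map Sigma.fst).Nodup

/-- The intervened structural functions `F_{X⃗ = x⃗}`: each `f_{X_i}` is replaced by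
the constant function returning `x_i`; the other functions are unchanged. -/
noncomputable def applyIvn (S : Signature) (F : StructFns S) (l : Ivn S) : StructFns S :=
  fun X B =>
    if h : ∃ x : S.R (Sum.inr X), (⟨X, x⟩ : (Y : S.V) × S.R (Sum.inr Y)) ∈ l then h.choose
    else F X B

/-- Formulas of the language `L_D`:
atoms `X = x`, negation, conjunction, intervention formulas `[X⃗=x⃗]φ`,
priority formulas `X=x ≺ Y=y`, and context formulas `φ^u`. -/
inductive Formula (S : Signature) : Type where
  | atom (X : S.U ⊕ S.V) (x : S.R X) : Formula S
  | neg (φ : Formula S) : Formula S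
  | and (φ ψ : Formula S) : Formula S
  | intervene (l : Ivn S) (φ : Formula S) : Formula S
  | prec (X : S.U ⊕ S.V) (x : S.R X) (Y : S.U ⊕ S.V) (y : S.R Y) : Formula S
  | ctx (u : ExoSetting S) (φ : Formula S) : Formula S

def Formula.imp {S : Signature} (φ ψ : Formula S) : Formula S := .neg (.and φ (.neg ψ))

def Formula.or {S : Signature} (φ ψ : Formula S) : Formula S := .neg (.and (.neg φ) (.neg ψ))

def Formula.iffF {S : Signature} (φ ψ : Formula S) : Formula S := .and (φ.imp ψ) (ψ.imp φ)

/-- Atoms `X = x`. -/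
abbrev SAtom (S : Signature) : Type := (X : S.U ⊕ S.V) × S.R X

/-- A priority structure `P = (Φ, ≪)`: a set of atoms together with a
priority relation among atoms. -/
structure Priority (S : Signature) where
  dom : Set (SAtom S)
  lt : SAtom S → SAtom S → Prop

/-- The priority relation is a strict partial order (asymmetric and transitive). -/
def Priority.Strict {S : Signature} (P : Priority S) : Prop :=
  (∀ a b, P.lt a b → ¬ P.lt b a) ∧ (∀ a b c, P.lt a b → P.lt b c → P.lt a c)

open Classical in
/-- The unique assignment complying with `F` whose values on the exogenous
variables are given by `u` (when `F` is recursive it exists and is unique). -/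
noncomputable def solve (S : Signature) (F : StructFns S) (u : ExoSetting S) : Assignment S :=
  if h : ∃ A : Assignment S, Complies S F A ∧ ∀ X : S.U, A (Sum.inl X) = u X then h.choose
  else fun X => Classical.arbitrary (S.R X)

/-- Truth of a formula at structural functions `F`, priority `P` and actual
assignment `A`. -/
def Sat (S : Signature) : StructFns S → Priority S → Assignment S → Formula S → Prop
  | _, _, A, .atom X x => A X = x
  | F, P, A, .neg φ => ¬ Sat S F P A φ
  | F, P, A, .and φ ψ => Sat S F P A φ ∧ Sat S F P A ψ
  | F, P, A, .intervene l φ =>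
      Sat S (applyIvn S F l) P (solve S (applyIvn S F l) (fun X => A (Sum.inl X))) φ
  | _, P, _, .prec X x Y y => P.lt ⟨X, x⟩ ⟨Y, y⟩
  | F, P, _, .ctx u φ => Sat S F P (solve S F u) φ

/-- A causal deontic model: recursive structural functions, a priority
structure which is a strict partial order, and an actual assignment complying
with the structural functions. -/
structure CDModel (S : Signature) where
  F : StructFns S
  P : Priority S
  A : Assignment S
  recF : Recursive S F
  strictP : P.Strict
  compliesA : Complies S F A

/-- Truth in a causal deontic model. -/
def CDModel.Sat {S : Signature} (M : CDModel S) (φ : Formula S) : Prop :=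
  _root_.Sat S M.F M.P M.A φ

section Aux

variable {S : Signature}

lemma wf_of_sto {lt : (S.U ⊕ S.V) → (S.U ⊕ S.V) → Prop}
    (hto : IsStrictTotalOrder (S.U ⊕ S.V) lt) : WellFounded lt := by
  haveI : IsTrans _ lt := hto.toIsTrans
  haveI : IsIrrefl _ lt := ⟨hto.toIsStrictOrder.toIrrefl.irrefl⟩
  exact Finite.wellFounded_of_trans_of_irrefl lt

lemma exists_complying (F : StructFns S) (hF : Recursive S F) (u : ExoSetting S) :
    ∃ A : Assignment S, Complies S F A ∧ ∀ X : S.U, A (Sum.inl X) = u X := by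
  classical
  obtain ⟨lt, hto, hdep⟩ := hF
  have hwf : WellFounded lt := wf_of_sto hto
  let g : ∀ X : S.U ⊕ S.V, (∀ Y, lt Y X → S.R Y) → S.R X := fun X =>
    match X with
    | Sum.inl a => fun _ => u a
    | Sum.inr v => fun prev =>
        F v (fun Y _ => if h : lt Y (Sum.inr v) then prev Y h else Classical.arbitrary _)
  let A : Assignment S := hwf.fix g
  have hfix : ∀ X, A X = g X (fun Y _ => A Y) := fun X => hwf.fix_eq g X
  refine ⟨A, ?_, fun a => hfix (Sum.inl a)⟩
  intro v
  rw [hfix (Sum.inr v)]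
  exact hdep v _ _ (fun Y hne hlt => by simp [hlt, Assignment.minus])

lemma complies_unique (F : StructFns S) (hF : Recursive S F)
    (A A' : Assignment S) (hA : Complies S F A) (hA' : Complies S F A')
    (hexo : ∀ X : S.U, A (Sum.inl X) = A' (Sum.inl X)) : A = A' := by
  obtain ⟨lt, hto, hdep⟩ := hF
  have hwf : WellFounded lt := wf_of_sto hto
  funext X
  induction X using hwf.induction with
  | _ X ih =>
    cases X with
    | inl a => exact hexo a
    | inr v =>
      rw [hA v, hA' v]
      exact hdep v _ _ (fun W hne hlt => ih W hlt)

lemma solve_spec (F : StructFns S) (hF : Recursive S F) (u : ExoSetting S) :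
    Complies S F (solve S F u) ∧ ∀ X : S.U, solve S F u (Sum.inl X) = u X := by
  have h := exists_complying F hF u
  rw [solve, dif_pos h]
  exact h.choose_spec

lemma solve_eq (F : StructFns S) (hF : Recursive S F) (u : ExoSetting S)
    (A : Assignment S) (hA : Complies S F A) (hexo : ∀ X : S.U, A (Sum.inl X) = u X) :
    solve S F u = A := by
  obtain ⟨hc, he⟩ := solve_spec F hF u
  exact complies_unique F hF _ _ hc hA (fun X => (he X).trans (hexo X).symm)

lemma applyIvn_mem (F : StructFns S) {l : Ivn S} (hl : Ivn.Distinct l)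
    {X : S.V} {x : S.R (Sum.inr X)}
    (hx : (⟨X, x⟩ : (W : S.V) × S.R (Sum.inr W)) ∈ l) (B : CoAssignment S (Sum.inr X)) :
    applyIvn S F l X B = x := by
  have h : ∃ x' : S.R (Sum.inr X), (⟨X, x'⟩ : (W : S.V) × S.R (Sum.inr W)) ∈ l := ⟨x, hx⟩
  rw [applyIvn, dif_pos h]
  have hmem := h.choose_spec
  have := List.inj_on_of_nodup_map hl hmem hx rfl
  have h2 := (Sigma.mk.inj_iff.mp this).2
  exact eq_of_heq h2

lemma applyIvn_not_mem (F : StructFns S) {l : Ivn S} {X : S.V}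
    (hx : X ∉ Ivn.fsts l) (B : CoAssignment S (Sum.inr X)) :
    applyIvn S F l X B = F X B := by
  rw [applyIvn, dif_neg]
  rintro ⟨x, hx'⟩
  exact hx (List.mem_map_of_mem (f := Sigma.fst) hx')

lemma recursive_applyIvn (F : StructFns S) (hF : Recursive S F) (l : Ivn S) :
    Recursive S (applyIvn S F l) := by
  obtain ⟨lt, hto, hdep⟩ := hF
  refine ⟨lt, hto, fun X B B' hBB => ?_⟩
  unfold applyIvn
  split
  · rfl
  · exact hdep X B B' hBB

end Aux

/-- validity of the composition axiom A3: For every causal deontic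
model `M_D`, every tuple `X⃗` of distinct endogenous variables with values `x⃗`,
every endogenous variable `Y` not in `X⃗` with value `y`, and every endogenous
variable `Z` not in `X⃗` and distinct from `Y` with value `z`: if
`M_D ⊨ [X⃗=x⃗]Y=y` and `M_D ⊨ [X⃗=x⃗]Z=z`, then `M_D ⊨ [X⃗=x⃗,Y=y]Z=z`. -/
theorem A3_valid (S : Signature) (M : CDModel S)
    (l : Ivn S) (hl : Ivn.Distinct l)
    (Y : S.V) (hY : Y ∉ Ivn.fsts l) (y : S.R (Sum.inr Y))
    (Z : S.V) (hZ : Z ∉ Ivn.fsts l) (hZY : Z ≠ Y) (z : S.R (Sum.inr Z))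
    (h1 : M.Sat (.intervene l (.atom (Sum.inr Y) y)))
    (h2 : M.Sat (.intervene l (.atom (Sum.inr Z) z))) :
    M.Sat (.intervene (l ++ [⟨Y, y⟩]) (.atom (Sum.inr Z) z)) := by
  have hl' : Ivn.Distinct (l ++ [⟨Y, y⟩]) := by
    simp only [Ivn.Distinct, List.map_append, List.nodup_append]
    exact ⟨hl, List.nodup_singleton _, by
      intro a ha b hb hab
      simp only [List.map_cons, List.map_nil, List.mem_singleton] at hb
      exact hY (by subst hab hb; exact ha)⟩
  set u : ExoSetting S := fun X => M.A (Sum.inl X) with hu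
  set Fl := applyIvn S M.F l with hFl
  set Fl' := applyIvn S M.F (l ++ [⟨Y, y⟩]) with hFl'
  have hrl : Recursive S Fl := recursive_applyIvn M.F M.recF l
  have hrl' : Recursive S Fl' := recursive_applyIvn M.F M.recF _
  obtain ⟨hcomp, hexo⟩ := solve_spec Fl hrl u
  have hY' : solve S Fl u (Sum.inr Y) = y := h1
  have hZ' : solve S Fl u (Sum.inr Z) = z := h2
  have hcomp' : Complies S Fl' (solve S Fl u) := by
    intro X
    by_cases hX : ∃ x : S.R (Sum.inr X), (⟨X, x⟩ : (W : S.V) × S.R (Sum.inr W)) ∈ l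
    · obtain ⟨x, hx⟩ := hX
      rw [hFl', applyIvn_mem M.F hl' (List.mem_append_left _ hx), hcomp X, hFl,
        applyIvn_mem M.F hl hx]
    · by_cases hXY : X = Y
      · subst hXY
        rw [hFl', applyIvn_mem M.F hl' (x := y)
          (List.mem_append_right _ (List.mem_singleton.mpr rfl))]
        exact hY'
      · have hXl : X ∉ Ivn.fsts l := by
          intro hm
          obtain ⟨⟨W, w⟩, ha, rfl⟩ := List.mem_map.mp hm
          exact hX ⟨w, ha⟩
        have hXl' : X ∉ Ivn.fsts (l ++ [⟨Y, y⟩]) := by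
          simp only [Ivn.fsts, List.map_append, List.mem_append, List.map_cons,
            List.map_nil, List.mem_singleton]
          rintro (h | h)
          · exact hXl h
          · exact hXY h
        rw [hFl', applyIvn_not_mem M.F hXl', hcomp X, hFl, applyIvn_not_mem M.F hXl]
  have hsolve : solve S Fl' u = solve S Fl u := solve_eq Fl' hrl' u _ hcomp' hexo
  show solve S Fl' u (Sum.inr Z) = z
  rw [hsolve]
  exact hZ'
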